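/- Let u : [0,∞) → [0,∞) be continuous and satisfy u(t) ≤ A + B ∫_0^t u(s) e^{−c(t−s)} ds for all t ≥ 0, where A, B, c > 0 are constants with B < c. Then u(t) ≤ A c/(c − B) for all t ≥ 0. -/

import Mathlib

open MeasureTheory

/-- Integral of the exponential kernel is bounded by 1/c. -/
lemma kernel_integral_le (c T : ℝ) (hc : 0 < c) (hT : 0 ≤ T) :
    ∫ s in Set.Icc (0:ℝ) T, Real.exp (-c * (T - s)) ≤ 1 / c := by
  have hderiv : ∀ s ∈ Set.uIcc (0:ℝ) T,
      HasDerivAt (fun s => Real.exp (-c * (T - s)) / c) (Real.exp (-c * (T - s))) s := by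
    intro s _
    have h1 : HasDerivAt (fun s : ℝ => -c * (T - s)) c s := by
      simpa using (HasDerivAt.const_sub T (hasDerivAt_id s)).const_mul (-c)
    have h2 := (h1.exp).div_const c
    have : Real.exp (-c * (T - s)) * c / c = Real.exp (-c * (T - s)) := by
      field_simp
    rwa [this] at h2
  have hint : IntervalIntegrable (fun s => Real.exp (-c * (T - s))) volume 0 T :=
    (Continuous.intervalIntegrable (by continuity) 0 T)
  have heq : ∫ s in (0:ℝ)..T, Real.exp (-c * (T - s))
      = Real.exp (-c * (T - T)) / c - Real.exp (-c * (T - 0)) / c :=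
    intervalIntegral.integral_eq_sub_of_hasDerivAt hderiv hint
  have hIcc : ∫ s in Set.Icc (0:ℝ) T, Real.exp (-c * (T - s))
      = ∫ s in (0:ℝ)..T, Real.exp (-c * (T - s)) := by
    rw [intervalIntegral.integral_of_le hT, MeasureTheory.integral_Icc_eq_integral_Ioc]
  rw [hIcc, heq]
  have := Real.exp_pos (-c * (T - 0))
  have h0 : Real.exp (-c * (T - T)) = 1 := by simp
  rw [h0]
  have : 0 < Real.exp (-c * (T - 0)) / c := by positivity
  linarith

/-- Grönwall-type inequality with exponentially decaying kernel: if u ≥ 0 is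
continuous and u(t) ≤ A + B ∫₀ᵗ u(s) e^{−c(t−s)} ds with 0 < B < c, then
u(t) ≤ A c/(c−B) for all t ≥ 0. -/
theorem gronwall_exponential_kernel (u : ℝ → ℝ) (A B c : ℝ)
    (hA : 0 < A) (hB : 0 < B) (hc : 0 < c) (hBc : B < c)
    (hucont : Continuous u) (hunonneg : ∀ t, 0 ≤ t → 0 ≤ u t)
    (hineq : ∀ t, 0 ≤ t →
      u t ≤ A + B * ∫ s in Set.Icc 0 t, u s * Real.exp (-c * (t - s))) :
    ∀ t, 0 ≤ t → u t ≤ A * c / (c - B) := by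
  intro t ht
  set M := A * c / (c - B) with hM
  have hcB : 0 < c - B := by linarith
  have hMpos : 0 < M := by positivity
  have hAM : A < M := by
    rw [hM, lt_div_iff₀ hcB]; nlinarith
  refine le_of_forall_pos_le_add ?_
  intro δ hδ
  by_contra hcon
  push_neg at hcon
  set S := {s : ℝ | 0 ≤ s ∧ M + δ ≤ u s} with hS
  have hSne : S.Nonempty := ⟨t, ht, hcon.le⟩
  have hSclosed : IsClosed S := by
    have : S = Set.Ici 0 ∩ u ⁻¹' Set.Ici (M + δ) := by
      ext s; simp [hS, Set.mem_setOf_eq, and_comm]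
    rw [this]
    exact isClosed_Ici.inter (isClosed_Ici.preimage hucont)
  have hSbdd : BddBelow S := ⟨0, fun s hs => hs.1⟩
  set T := sInf S with hTdef
  have hTmem : T ∈ S := hSclosed.csInf_mem hSne hSbdd
  have hT0 : 0 ≤ T := hTmem.1
  have hTu : M + δ ≤ u T := hTmem.2
  have hlt : ∀ s, 0 ≤ s → s < T → u s < M + δ := by
    intro s hs hsT
    by_contra h
    push_neg at h
    exact absurd (csInf_le hSbdd ⟨hs, h⟩) (not_le.mpr hsT)
  -- T = 0 case: contradiction since u 0 ≤ A < M + δ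
  rcases eq_or_lt_of_le hT0 with hT0eq | hT0lt
  · have h0 : u 0 ≤ A := by
      have := hineq 0 le_rfl
      have hz : ∫ s in Set.Icc (0:ℝ) 0, u s * Real.exp (-c * (0 - s)) = 0 := by
        rw [Set.Icc_self, Measure.restrict_singleton]
        simp
      rw [hz] at this; linarith
    rw [← hT0eq] at hTu
    linarith
  -- T > 0 : u T ≤ M + δ by continuity from the left
  have hTle : u T ≤ M + δ := by
    have htend : Filter.Tendsto u (nhdsWithin T (Set.Iio T)) (nhds (u T)) :=
      (hucont.tendsto T).mono_left nhdsWithin_le_nhds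
    refine le_of_tendsto htend ?_
    filter_upwards [Ioo_mem_nhdsLT_of_mem (Set.mem_Ioc.mpr ⟨hT0lt, le_rfl⟩)] with s hs
    exact (hlt s (le_of_lt hs.1) hs.2).le
  have hbound : ∀ s ∈ Set.Icc (0:ℝ) T, u s ≤ M + δ := by
    intro s hs
    rcases eq_or_lt_of_le hs.2 with h | h
    · rw [h]; exact hTle
    · exact (hlt s hs.1 h).le
  -- estimate
  have hint1 : IntegrableOn (fun s => u s * Real.exp (-c * (T - s))) (Set.Icc 0 T) volume :=
    (Continuous.integrableOn_Icc (by fun_prop))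
  have hint2 : IntegrableOn (fun s => (M + δ) * Real.exp (-c * (T - s))) (Set.Icc 0 T) volume :=
    (Continuous.integrableOn_Icc (by fun_prop))
  have hmono : ∫ s in Set.Icc (0:ℝ) T, u s * Real.exp (-c * (T - s))
      ≤ ∫ s in Set.Icc (0:ℝ) T, (M + δ) * Real.exp (-c * (T - s)) := by
    refine setIntegral_mono_on hint1 hint2 measurableSet_Icc ?_
    intro s hs
    exact mul_le_mul_of_nonneg_right (hbound s hs) (Real.exp_pos _).le
  have hconst : ∫ s in Set.Icc (0:ℝ) T, (M + δ) * Real.exp (-c * (T - s))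
      = (M + δ) * ∫ s in Set.Icc (0:ℝ) T, Real.exp (-c * (T - s)) :=
    integral_const_mul _ _
  have hker := kernel_integral_le c T hc hT0
  have hMδ : 0 < M + δ := by linarith
  have hfinal : u T ≤ A + B * ((M + δ) * (1 / c)) := by
    have h1 := hineq T hT0
    have h2 : (M + δ) * ∫ s in Set.Icc (0:ℝ) T, Real.exp (-c * (T - s))
        ≤ (M + δ) * (1 / c) := mul_le_mul_of_nonneg_left hker hMδ.le
    calc u T ≤ A + B * ∫ s in Set.Icc (0:ℝ) T, u s * Real.exp (-c * (T - s)) := h1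
      _ ≤ A + B * ((M + δ) * ∫ s in Set.Icc (0:ℝ) T, Real.exp (-c * (T - s))) := by
          rw [← hconst]; exact add_le_add_right (mul_le_mul_of_nonneg_left hmono hB.le) A
      _ ≤ A + B * ((M + δ) * (1 / c)) := add_le_add_right (mul_le_mul_of_nonneg_left h2 hB.le) A
  -- but A + B(M+δ)/c < M + δ
  have hcontra : A + B * ((M + δ) * (1 / c)) < M + δ := by
    have hMc : M * (c - B) = A * c := by
      rw [hM]; exact div_mul_cancel₀ _ (ne_of_gt hcB)
    have key : A * c + B * (M + δ) < (M + δ) * c := by nlinarith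
    have heq : A + B * ((M + δ) * (1 / c)) = (A * c + B * (M + δ)) / c := by
      field_simp
    rw [heq, div_lt_iff₀ hc]
    exact key
  linarith
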